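/- arXiv:1905.00915 — 2 statements merged into one kernel-verified Lean document; each statement's English description precedes it below -/
import Mathlib

section
/- Let f: S^n → S^n be continuous and suppose ∫_{S^n} f(ζ) dμ(ζ) = 0, where μ is the normalized spherical measure. Define F(x,y) = ∫_{S^n} M_{-y}(f(ζ)) · ((1-‖x‖²)/‖ζ-x‖²)^n dμ(ζ). Then the partial derivative of F in y at (0,0) applied to a vector v ∈ ℝ^{n+1} equals -2v + 2∫_{S^n} ⟨v, f(ζ)⟩ f(ζ) dμ(ζ). -/
open MeasureTheory Metric
open scoped RealInnerProductSpace

/-- The Möbius transformation `M_x` of the unit ball sending `0` to `x`. -/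
noncomputable def Mob {E : Type*} [NormedAddCommGroup E] [InnerProductSpace ℝ E]
    (x z : E) : E :=
  (1 + ‖x‖ ^ 2 * ‖z‖ ^ 2 + 2 * ⟪x, z⟫)⁻¹ •
    ((1 - ‖x‖ ^ 2) • z + (1 + ‖z‖ ^ 2 + 2 * ⟪x, z⟫) • x)

section Aux
open ContinuousLinearMap

variable {E : Type*} [NormedAddCommGroup E] [InnerProductSpace ℝ E]

noncomputable def mobD (x z : E) : E →L[ℝ] E :=
  (1 + ‖x‖ ^ 2 * ‖z‖ ^ 2 + 2 * ⟪x, z⟫)⁻¹ •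
    ((1 + ‖z‖ ^ 2 + 2 * ⟪x, z⟫) • ContinuousLinearMap.id ℝ E
      + (((-2 : ℝ) • innerSL ℝ x).smulRight z)
      + (((2 : ℝ) • innerSL ℝ z).smulRight x))
  - ((1 + ‖x‖ ^ 2 * ‖z‖ ^ 2 + 2 * ⟪x, z⟫) ^ 2)⁻¹ •
      (((2 * ‖z‖ ^ 2) • innerSL ℝ x + (2 : ℝ) • innerSL ℝ z).smulRight
        ((1 - ‖x‖ ^ 2) • z + (1 + ‖z‖ ^ 2 + 2 * ⟪x, z⟫) • x))

lemma mobD_apply (x z v : E) : mobD x z v =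
    (1 + ‖x‖ ^ 2 * ‖z‖ ^ 2 + 2 * ⟪x, z⟫)⁻¹ •
      ((1 + ‖z‖ ^ 2 + 2 * ⟪x, z⟫) • v + (-2 * ⟪x, v⟫) • z + (2 * ⟪z, v⟫) • x)
    - ((1 + ‖x‖ ^ 2 * ‖z‖ ^ 2 + 2 * ⟪x, z⟫) ^ 2)⁻¹ •
      ((2 * ‖z‖ ^ 2 * ⟪x, v⟫ + 2 * ⟪z, v⟫) •
        ((1 - ‖x‖ ^ 2) • z + (1 + ‖z‖ ^ 2 + 2 * ⟪x, z⟫) • x)) := by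
  simp [mobD, smul_smul]

lemma mob_hasFDerivAt (z x₀ : E)
    (h : (1 + ‖x₀‖ ^ 2 * ‖z‖ ^ 2 + 2 * ⟪x₀, z⟫) ≠ 0) :
    HasFDerivAt (fun x => Mob x z) (mobD x₀ z) x₀ := by
  have h2 : HasFDerivAt (fun x : E => ⟪x, z⟫) (innerSL ℝ z) x₀ := by
    exact (innerSL ℝ z).hasFDerivAt.congr_of_eventuallyEq
      (Filter.Eventually.of_forall fun x => real_inner_comm z x)
  have h1 : HasFDerivAt (fun x : E => ‖x‖ ^ 2) ((2 : ℝ) • innerSL ℝ x₀) x₀ := by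
    have := (hasFDerivAt_id x₀).norm_sq
    refine this.congr_fderiv ?_
    ext v
    simp [two_smul]
  have hd : HasFDerivAt (fun x : E => 1 + ‖x‖ ^ 2 * ‖z‖ ^ 2 + 2 * ⟪x, z⟫)
      ((2 * ‖z‖ ^ 2) • innerSL ℝ x₀ + (2 : ℝ) • innerSL ℝ z) x₀ := by
    have := ((h1.mul_const (‖z‖ ^ 2)).const_add (1 : ℝ)).add (h2.const_mul (2 : ℝ))
    refine this.congr_fderiv ?_
    ext v
    simp
    ring
  have hdinv : HasFDerivAt (fun x : E => (1 + ‖x‖ ^ 2 * ‖z‖ ^ 2 + 2 * ⟪x, z⟫)⁻¹)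
      (-(((1 + ‖x₀‖ ^ 2 * ‖z‖ ^ 2 + 2 * ⟪x₀, z⟫) ^ 2)⁻¹) •
        ((2 * ‖z‖ ^ 2) • innerSL ℝ x₀ + (2 : ℝ) • innerSL ℝ z)) x₀ := by
    have := (hasFDerivAt_inv h).comp x₀ hd
    refine this.congr_fderiv ?_
    ext v
    simp
    ring
  have hN : HasFDerivAt (fun x : E => (1 - ‖x‖ ^ 2) • z + (1 + ‖z‖ ^ 2 + 2 * ⟪x, z⟫) • x)
      ((((-2 : ℝ) • innerSL ℝ x₀).smulRight z)
        + ((1 + ‖z‖ ^ 2 + 2 * ⟪x₀, z⟫) • ContinuousLinearMap.id ℝ E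
          + (((2 : ℝ) • innerSL ℝ z).smulRight x₀))) x₀ := by
    have hA : HasFDerivAt (fun x : E => (1 - ‖x‖ ^ 2) • z)
        ((((-2 : ℝ)) • innerSL ℝ x₀).smulRight z) x₀ := by
      have := ((h1.const_sub (1 : ℝ)).smul_const z)
      convert this using 1
      ext v
      simp
    have hs : HasFDerivAt (fun x : E => 1 + ‖z‖ ^ 2 + 2 * ⟪x, z⟫)
        ((2 : ℝ) • innerSL ℝ z) x₀ := by
      have := (h2.const_mul (2 : ℝ)).const_add (1 + ‖z‖ ^ 2)
      exact this
    have hB := hs.smul (hasFDerivAt_id x₀)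
    exact hA.add hB
  have := hdinv.smul hN
  have key : HasFDerivAt (fun x => Mob x z) _ x₀ := this
  convert key using 1
  ext v
  simp [mobD, mobD_apply, Mob]
  module

lemma mobD_zero_apply (z v : E) : mobD 0 z v = (1 + ‖z‖ ^ 2) • v - (2 * ⟪z, v⟫) • z := by
  simp [mobD_apply]

lemma hasFDerivAt_mob_neg (z y₀ : E)
    (h : (1 + ‖(-y₀ : E)‖ ^ 2 * ‖z‖ ^ 2 + 2 * ⟪-y₀, z⟫) ≠ 0) :
    HasFDerivAt (fun y => Mob (-y) z) (-(mobD (-y₀) z)) y₀ := by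
  have := (mob_hasFDerivAt z (-y₀) h).comp y₀ (hasFDerivAt_id y₀).neg
  refine this.congr_fderiv ?_
  ext v
  simp

lemma denom_eq (x z : E) (hz : ‖z‖ = 1) :
    1 + ‖x‖ ^ 2 * ‖z‖ ^ 2 + 2 * ⟪x, z⟫ = ‖z + x‖ ^ 2 := by
  rw [norm_add_sq_real, hz, real_inner_comm]
  ring

lemma denom_ge (x z : E) (hz : ‖z‖ = 1) (hx : ‖x‖ ≤ 1 / 4) :
    (9 / 16 : ℝ) ≤ 1 + ‖x‖ ^ 2 * ‖z‖ ^ 2 + 2 * ⟪x, z⟫ := by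
  rw [denom_eq x z hz]
  have h1 : ‖z‖ - ‖x‖ ≤ ‖z + x‖ := by
    have := norm_sub_norm_le z (-x)
    simpa using this
  nlinarith [norm_nonneg (z + x), norm_nonneg x]

set_option maxHeartbeats 1000000 in
set_option synthInstance.maxHeartbeats 400000 in
lemma mobD_norm_le (x z : E) (hz : ‖z‖ = 1) (hx : ‖x‖ ≤ 1 / 4) :
    ‖mobD x z‖ ≤ 100 := by
  have hd9 : (9 / 16 : ℝ) ≤ 1 + ‖x‖ ^ 2 * ‖z‖ ^ 2 + 2 * ⟪x, z⟫ := denom_ge x z hz hx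
  have hd0 : (0 : ℝ) < 1 + ‖x‖ ^ 2 * ‖z‖ ^ 2 + 2 * ⟪x, z⟫ := by linarith
  have hdinv : (1 + ‖x‖ ^ 2 * ‖z‖ ^ 2 + 2 * ⟪x, z⟫)⁻¹ ≤ 16 / 9 := by
    rw [inv_le_comm₀ hd0 (by norm_num)]
    linarith
  have hdinv0 : (0 : ℝ) ≤ (1 + ‖x‖ ^ 2 * ‖z‖ ^ 2 + 2 * ⟪x, z⟫)⁻¹ := by positivity
  have hd2inv : ((1 + ‖x‖ ^ 2 * ‖z‖ ^ 2 + 2 * ⟪x, z⟫) ^ 2)⁻¹ ≤ (16 / 9) ^ 2 := by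
    rw [inv_le_comm₀ (by positivity) (by norm_num)]
    nlinarith
  have hd2inv0 : (0 : ℝ) ≤ ((1 + ‖x‖ ^ 2 * ‖z‖ ^ 2 + 2 * ⟪x, z⟫) ^ 2)⁻¹ := by positivity
  have ht : |⟪x, z⟫| ≤ 1 / 4 := by
    calc |⟪x, z⟫| ≤ ‖x‖ * ‖z‖ := abs_real_inner_le_norm x z
    _ ≤ 1 / 4 := by rw [hz]; linarith
  rw [abs_le] at ht
  have hx0 : (0 : ℝ) ≤ ‖x‖ := norm_nonneg x
  have hP : ‖(1 + ‖z‖ ^ 2 + 2 * ⟪x, z⟫) • ContinuousLinearMap.id ℝ E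
      + (((-2 : ℝ) • innerSL ℝ x).smulRight z)
      + (((2 : ℝ) • innerSL ℝ z).smulRight x)‖ ≤ 7 / 2 := by
    refine le_trans (norm_add_le _ _) (le_trans (add_le_add (norm_add_le _ _) le_rfl) ?_)
    have e1 : ‖(1 + ‖z‖ ^ 2 + 2 * ⟪x, z⟫) • ContinuousLinearMap.id ℝ E‖ ≤ 5 / 2 := by
      refine le_trans (norm_smul_le (1 + ‖z‖ ^ 2 + 2 * ⟪x, z⟫) (ContinuousLinearMap.id ℝ E)) ?_
      have h0 : ‖ContinuousLinearMap.id ℝ E‖ ≤ 1 := norm_id_le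
      have h1 : ‖(1 + ‖z‖ ^ 2 + 2 * ⟪x, z⟫ : ℝ)‖ ≤ 5 / 2 := by
        rw [Real.norm_eq_abs, hz, abs_le]
        constructor <;> nlinarith
      nlinarith [norm_nonneg (ContinuousLinearMap.id ℝ E), norm_nonneg (1 + ‖z‖ ^ 2 + 2 * ⟪x, z⟫ : ℝ)]
    have e2 : ‖(((-2 : ℝ) • innerSL ℝ x).smulRight z)‖ ≤ 1 / 2 := by
      rw [ContinuousLinearMap.norm_smulRight_apply, hz, mul_one]
      refine le_trans (norm_smul_le (-2 : ℝ) (innerSL ℝ x)) ?_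
      rw [innerSL_apply_norm, Real.norm_eq_abs, abs_of_nonpos (by norm_num : (-2:ℝ) ≤ 0)]
      nlinarith
    have e3 : ‖(((2 : ℝ) • innerSL ℝ z).smulRight x)‖ ≤ 1 / 2 := by
      rw [ContinuousLinearMap.norm_smulRight_apply]
      refine le_trans (mul_le_mul_of_nonneg_right (norm_smul_le (2 : ℝ) (innerSL ℝ z)) hx0) ?_
      rw [innerSL_apply_norm, Real.norm_eq_abs, abs_of_nonneg (by norm_num : (0:ℝ) ≤ 2), hz, mul_one]
      nlinarith
    linarith
  have hN : ‖(1 - ‖x‖ ^ 2) • z + (1 + ‖z‖ ^ 2 + 2 * ⟪x, z⟫) • x‖ ≤ 2 := by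
    refine le_trans (norm_add_le _ _) ?_
    rw [norm_smul, norm_smul, hz, mul_one]
    simp only [Real.norm_eq_abs]
    have h1 : |1 - ‖x‖ ^ 2| ≤ 1 := by
      rw [abs_le]; constructor <;> nlinarith
    have h2 : |1 + (1 : ℝ) ^ 2 + 2 * ⟪x, z⟫| ≤ 5 / 2 := by
      rw [abs_le]; constructor <;> nlinarith
    have h4 : |1 + (1 : ℝ) ^ 2 + 2 * ⟪x, z⟫| * ‖x‖ ≤ (5 / 2) * (1 / 4) :=
      mul_le_mul h2 hx hx0 (by norm_num)
    exact le_trans (add_le_add h1 h4) (by norm_num)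
  have hQc : ‖(2 * ‖z‖ ^ 2) • innerSL ℝ x + (2 : ℝ) • innerSL ℝ z‖ ≤ 5 / 2 := by
    refine le_trans (norm_add_le _ _) ?_
    refine le_trans (add_le_add (norm_smul_le (2 * ‖z‖ ^ 2) (innerSL ℝ x))
      (norm_smul_le (2 : ℝ) (innerSL ℝ z))) ?_
    rw [innerSL_apply_norm, innerSL_apply_norm, hz]
    simp only [Real.norm_eq_abs]
    norm_num
    linarith
  have hQ : ‖((2 * ‖z‖ ^ 2) • innerSL ℝ x + (2 : ℝ) • innerSL ℝ z).smulRight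
      ((1 - ‖x‖ ^ 2) • z + (1 + ‖z‖ ^ 2 + 2 * ⟪x, z⟫) • x)‖ ≤ 5 := by
    rw [ContinuousLinearMap.norm_smulRight_apply]
    nlinarith [norm_nonneg ((2 * ‖z‖ ^ 2) • innerSL ℝ x + (2 : ℝ) • innerSL ℝ z),
      norm_nonneg ((1 - ‖x‖ ^ 2) • z + (1 + ‖z‖ ^ 2 + 2 * ⟪x, z⟫) • x)]
  rw [mobD]
  refine le_trans (norm_sub_le _ _) ?_
  refine le_trans (add_le_add
    (norm_smul_le ((1 + ‖x‖ ^ 2 * ‖z‖ ^ 2 + 2 * ⟪x, z⟫)⁻¹)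
      ((1 + ‖z‖ ^ 2 + 2 * ⟪x, z⟫) • ContinuousLinearMap.id ℝ E
        + (((-2 : ℝ) • innerSL ℝ x).smulRight z)
        + (((2 : ℝ) • innerSL ℝ z).smulRight x)))
    (norm_smul_le (((1 + ‖x‖ ^ 2 * ‖z‖ ^ 2 + 2 * ⟪x, z⟫) ^ 2)⁻¹)
      (((2 * ‖z‖ ^ 2) • innerSL ℝ x + (2 : ℝ) • innerSL ℝ z).smulRight
        ((1 - ‖x‖ ^ 2) • z + (1 + ‖z‖ ^ 2 + 2 * ⟪x, z⟫) • x)))) ?_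
  simp only [Real.norm_eq_abs, abs_of_nonneg hdinv0, abs_of_nonneg hd2inv0]
  nlinarith [norm_nonneg ((1 + ‖z‖ ^ 2 + 2 * ⟪x, z⟫) • ContinuousLinearMap.id ℝ E
      + (((-2 : ℝ) • innerSL ℝ x).smulRight z) + (((2 : ℝ) • innerSL ℝ z).smulRight x)),
    norm_nonneg (((2 * ‖z‖ ^ 2) • innerSL ℝ x + (2 : ℝ) • innerSL ℝ z).smulRight
      ((1 - ‖x‖ ^ 2) • z + (1 + ‖z‖ ^ 2 + 2 * ⟪x, z⟫) • x))]

lemma mob_zero (z : E) : Mob (0 : E) z = z := by simp [Mob]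

lemma mobD_zero_norm_le (z : E) (hz : ‖z‖ = 1) : ‖mobD (0 : E) z‖ ≤ 100 :=
  mobD_norm_le 0 z hz (by simp)

lemma contT : Continuous fun z : E => mobD (0 : E) z := by
  have h1 : (fun z : E => mobD (0 : E) z) = fun z : E =>
      (1 + ‖z‖ ^ 2) • ContinuousLinearMap.id ℝ E
        - (ContinuousLinearMap.smulRightL ℝ E E ((2 : ℝ) • innerSL ℝ z)) z := by
    funext z
    ext v
    simp [mobD_zero_apply, ContinuousLinearMap.smulRightL, smul_smul]
  rw [h1]
  refine Continuous.sub ?_ ?_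
  · exact (continuous_const.add ((continuous_norm).pow 2)).smul continuous_const
  · refine Continuous.clm_apply ?_ continuous_id
    exact (ContinuousLinearMap.smulRightL ℝ E E).continuous.comp
      (((innerSL ℝ (E := E)).continuous).const_smul (2 : ℝ))


end Aux

set_option maxHeartbeats 1000000 in
/-- for `f : S^n → S^n` continuous with `∫ f dμ = 0` and
`F(x,y) = ∫ M_{-y}(f ζ) ((1-‖x‖²)/‖ζ-x‖²)^n dμ(ζ)`, the partial derivative of
`F` in `y` at `(0,0)` applied to `v` is `-2v + 2∫ ⟪v, f ζ⟫ f(ζ) dμ(ζ)`. -/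
theorem barycentric_partial_deriv_y (n : ℕ)
    (E : Type*) [NormedAddCommGroup E] [InnerProductSpace ℝ E]
    [FiniteDimensional ℝ E] [MeasurableSpace E] [BorelSpace E]
    (hdim : Module.finrank ℝ E = n + 1)
    (μ : Measure E) [IsProbabilityMeasure μ]
    (hsupp : μ (Metric.sphere (0 : E) 1)ᶜ = 0)
    (hinv : ∀ R : E ≃ₗᵢ[ℝ] E, Measure.map R μ = μ)
    (f : E → E) (hf : ContinuousOn f (Metric.sphere (0 : E) 1))
    (hfs : Set.MapsTo f (Metric.sphere (0 : E) 1) (Metric.sphere (0 : E) 1))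
    (hbal : ∫ ζ, f ζ ∂μ = 0)
    (F : E → E → E)
    (hF : ∀ x y, F x y =
      ∫ ζ, (((1 - ‖x‖ ^ 2) / ‖ζ - x‖ ^ 2) ^ n) • Mob (-y) (f ζ) ∂μ) :
    ∃ D : E →L[ℝ] E, HasFDerivAt (fun y => F 0 y) D (0 : E) ∧
      ∀ v : E, D v = -(2 : ℝ) • v + (2 : ℝ) • ∫ ζ, ⟪v, f ζ⟫ • f ζ ∂μ := by
  have hae : ∀ᵐ ζ ∂μ, ζ ∈ Metric.sphere (0 : E) 1 := by
    rw [MeasureTheory.ae_iff]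
    convert hsupp using 2
    rfl
  have hres : μ.restrict (Metric.sphere (0 : E) 1) = μ :=
    Measure.restrict_eq_self_of_ae_mem hae
  have hfae : ∀ᵐ ζ ∂μ, ‖f ζ‖ = 1 := by
    filter_upwards [hae] with ζ h
    exact mem_sphere_zero_iff_norm.mp (hfs h)
  have hfm : AEStronglyMeasurable f μ := by
    rw [← hres]
    exact hf.aestronglyMeasurable isClosed_sphere.measurableSet
  -- F 0 y is the integral of Mob (-y) (f ζ)
  have hF0 : (fun y => F 0 y) = fun y => ∫ ζ, Mob (-y) (f ζ) ∂μ := by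
    funext y
    rw [hF 0 y]
    refine integral_congr_ae ?_
    filter_upwards [hae] with ζ hζ
    have h1 : ‖ζ‖ = 1 := mem_sphere_zero_iff_norm.mp hζ
    simp [h1]
  -- differentiation under the integral sign
  have hmain : HasFDerivAt (fun y : E => ∫ ζ, Mob (-y) (f ζ) ∂μ)
      (∫ ζ, -(mobD (-(0 : E)) (f ζ)) ∂μ) (0 : E) := by
    refine hasFDerivAt_integral_of_dominated_of_fderiv_le
      (F := fun y ζ => Mob (-y) (f ζ)) (F' := fun y ζ => -(mobD (-y) (f ζ)))
      (bound := fun _ => (100 : ℝ)) (Metric.ball_mem_nhds (0 : E) (by norm_num : (0:ℝ) < 1/4)) ?_ ?_ ?_ ?_ ?_ ?_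
    · -- measurability of F y
      refine Filter.eventually_of_mem (Metric.ball_mem_nhds (0 : E) one_pos) ?_
      intro y hy
      rw [mem_ball_zero_iff] at hy
      have hcon : ContinuousOn (fun z => Mob (-y) z) (Metric.sphere (0 : E) 1) := by
        have hden : ∀ z ∈ Metric.sphere (0 : E) 1,
            (1 + ‖(-y : E)‖ ^ 2 * ‖z‖ ^ 2 + 2 * ⟪-y, z⟫) ≠ 0 := by
          intro z hz
          rw [denom_eq (-y) z (mem_sphere_zero_iff_norm.mp hz)]
          have h2 : ‖z‖ - ‖y‖ ≤ ‖z + -y‖ := by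
            rw [← sub_eq_add_neg]; exact norm_sub_norm_le z y
          rw [mem_sphere_zero_iff_norm.mp hz] at h2
          have h3 : (0:ℝ) < ‖z + -y‖ := by linarith
          positivity
        have hip : Continuous fun z : E => ⟪(-y : E), z⟫ :=
          continuous_const.inner continuous_id
        have hc : Continuous fun z : E => 1 + ‖(-y : E)‖ ^ 2 * ‖z‖ ^ 2 + 2 * ⟪-y, z⟫ :=
          (continuous_const.add (continuous_const.mul (continuous_norm.pow 2))).add (continuous_const.mul hip)
        have hN : Continuous fun z : E =>
            (1 - ‖(-y : E)‖ ^ 2) • z + (1 + ‖z‖ ^ 2 + 2 * ⟪-y, z⟫) • (-y : E) :=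
          (continuous_id.const_smul _).add
            (((continuous_const.add (continuous_norm.pow 2)).add (continuous_const.mul hip)).smul
              continuous_const)
        exact (hc.continuousOn.inv₀ hden).smul hN.continuousOn
      rw [← hres]
      exact (hcon.comp hf hfs).aestronglyMeasurable isClosed_sphere.measurableSet
    · -- integrability at 0
      have h1 : (fun ζ => Mob (-(0 : E)) (f ζ)) = f := by
        funext ζ; rw [neg_zero, mob_zero]
      show Integrable (fun ζ => Mob (-(0 : E)) (f ζ)) μ
      rw [h1]
      refine Integrable.mono' (integrable_const (1 : ℝ)) hfm ?_
      filter_upwards [hfae] with ζ h using le_of_eq h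
    · -- measurability of F' 0
      show AEStronglyMeasurable (fun ζ => -(mobD (-(0 : E)) (f ζ))) μ
      have : (fun ζ => -(mobD (-(0 : E)) (f ζ))) = fun ζ => -(mobD (0 : E) (f ζ)) := by
        simp
      rw [this]
      exact (contT.comp_aestronglyMeasurable hfm).neg
    · -- bound
      filter_upwards [hfae] with ζ hζ
      intro y hy
      rw [norm_neg]
      refine mobD_norm_le (-y) (f ζ) hζ ?_
      rw [norm_neg]
      exact le_of_lt (mem_ball_zero_iff.mp hy)
    · exact integrable_const _
    · -- differentiability
      filter_upwards [hfae] with ζ hζ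
      intro y hy
      rw [mem_ball_zero_iff] at hy
      refine hasFDerivAt_mob_neg (f ζ) y ?_
      rw [denom_eq (-y) (f ζ) hζ]
      have h2 : ‖f ζ‖ - ‖y‖ ≤ ‖f ζ + -y‖ := by
        rw [← sub_eq_add_neg]; exact norm_sub_norm_le (f ζ) y
      rw [hζ] at h2
      have h3 : (0:ℝ) < ‖f ζ + -y‖ := by linarith [hy]
      positivity
  refine ⟨∫ ζ, -(mobD (-(0 : E)) (f ζ)) ∂μ, ?_, ?_⟩
  · rw [hF0]; exact hmain
  · intro v
    have hint : Integrable (fun ζ => -(mobD (-(0 : E)) (f ζ))) μ := by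
      refine Integrable.neg ?_
      refine Integrable.mono' (integrable_const (100 : ℝ)) ?_ ?_
      · rw [neg_zero]
        exact contT.comp_aestronglyMeasurable hfm
      · filter_upwards [hfae] with ζ h
        rw [neg_zero]
        exact mobD_zero_norm_le (f ζ) h
    rw [ContinuousLinearMap.integral_apply hint v]
    have heq : ∀ᵐ ζ ∂μ, (-(mobD (-(0 : E)) (f ζ))) v
        = -(2 : ℝ) • v + (2 : ℝ) • (⟪v, f ζ⟫ • f ζ) := by
      filter_upwards [hfae] with ζ h
      rw [neg_zero, ContinuousLinearMap.neg_apply, mobD_zero_apply, h, real_inner_comm]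
      have h12 : (1 + (1:ℝ) ^ 2) = 2 := by norm_num
      rw [h12]
      module
    rw [integral_congr_ae heq]
    have hint2 : Integrable (fun ζ => (2 : ℝ) • (⟪v, f ζ⟫ • f ζ)) μ := by
      have hcont : Continuous fun z : E => (2 : ℝ) • (⟪v, z⟫ • z) :=
        (((continuous_const.inner continuous_id)).smul continuous_id).const_smul (2 : ℝ)
      refine Integrable.mono' (integrable_const (2 * ‖v‖ : ℝ))
        (hcont.comp_aestronglyMeasurable hfm) ?_
      filter_upwards [hfae] with ζ h
      rw [norm_smul, norm_smul, h, mul_one]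
      simp only [Real.norm_eq_abs, abs_of_nonneg (by norm_num : (0:ℝ) ≤ 2)]
      have := abs_real_inner_le_norm v (f ζ)
      rw [h, mul_one] at this
      nlinarith [abs_nonneg ⟪v, f ζ⟫, norm_nonneg v]
    rw [integral_add (integrable_const _) hint2, integral_const, integral_smul]
    simp
end

section
/- Let f: S^n → S^n be continuous with ∫_{S^n} f(ζ) dμ(ζ) = 0, and define F(x,y) = ∫_{S^n} M_{-y}(f(ζ)) · ((1-‖x‖²)/‖ζ-x‖²)^n dμ(ζ). Then the partial derivative of F in x at (0,0) applied to v ∈ ℝ^{n+1} equals 2n ∫_{S^n} ⟨v,ζ⟩ f(ζ) dμ(ζ); in particular its operator norm is at most 2n. -/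
open MeasureTheory Metric
open scoped RealInnerProductSpace

lemma aux_deriv {E : Type*} [NormedAddCommGroup E] [InnerProductSpace ℝ E]
    (n : ℕ) (w ζ x : E) (hd : (‖ζ - x‖ : ℝ) ^ 2 ≠ 0) :
    HasFDerivAt (fun x : E => (((1 - ‖x‖ ^ 2) / ‖ζ - x‖ ^ 2) ^ n) • w)
      ((((2 * n : ℝ) * ((1 - ‖x‖ ^ 2) / ‖ζ - x‖ ^ 2) ^ (n - 1) / (‖ζ - x‖ ^ 2) ^ 2) •
        ((1 - ‖x‖ ^ 2) • innerSL ℝ (ζ - x) - (‖ζ - x‖ ^ 2) • innerSL ℝ x)).smulRight w) x := by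
  have hc : HasFDerivAt (fun y : E => 1 - ‖y‖ ^ 2)
      ((0 : E →L[ℝ] ℝ) - (2 • (innerSL ℝ x).comp (ContinuousLinearMap.id ℝ E))) x :=
    (hasFDerivAt_const (1:ℝ) x).sub ((hasFDerivAt_id x).norm_sq)
  have hdd : HasFDerivAt (fun y : E => ‖ζ - y‖ ^ 2)
      (2 • (innerSL ℝ (ζ - x)).comp ((0 : E →L[ℝ] E) - ContinuousLinearMap.id ℝ E)) x :=
    ((hasFDerivAt_const ζ x).sub (hasFDerivAt_id x)).norm_sq
  have hinv : HasFDerivAt (fun y : E => (‖ζ - y‖ ^ 2)⁻¹)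
      ((-ContinuousLinearMap.mulLeftRight ℝ ℝ (‖ζ - x‖ ^ 2)⁻¹ (‖ζ - x‖ ^ 2)⁻¹).comp
        (2 • (innerSL ℝ (ζ - x)).comp ((0 : E →L[ℝ] E) - ContinuousLinearMap.id ℝ E))) x :=
    (hasFDerivAt_inv' hd).comp x hdd
  have hq := hc.mul hinv
  have hpow := (hasDerivAt_pow n ((1 - ‖x‖ ^ 2) * (‖ζ - x‖ ^ 2)⁻¹)).comp_hasFDerivAt x hq
  have H := hpow.smul_const w
  simp only [div_eq_mul_inv]
  convert H using 1
  · rfl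
  ext v
  simp only [ContinuousLinearMap.smulRight_apply, ContinuousLinearMap.smul_apply,
    ContinuousLinearMap.coe_smul', Pi.smul_apply, ContinuousLinearMap.sub_apply,
    ContinuousLinearMap.add_apply, ContinuousLinearMap.coe_comp', Function.comp_apply,
    ContinuousLinearMap.neg_apply, ContinuousLinearMap.mulLeftRight_apply,
    ContinuousLinearMap.coe_id', id_eq, ContinuousLinearMap.zero_apply, innerSL_apply_apply,
    innerSL_apply_apply, smul_eq_mul, zero_sub, map_neg, mul_neg, neg_mul, neg_neg, zero_mul]
  congr 1
  simp only [inner_neg_right, nsmul_eq_mul, Nat.cast_ofNat, smul_eq_mul]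
  field_simp
  ring

set_option maxHeartbeats 1000000 in
set_option synthInstance.maxHeartbeats 200000 in
/-- for `f : S^n → S^n` continuous with `∫ f dμ = 0` and
`F(x,y) = ∫ M_{-y}(f ζ) ((1-‖x‖²)/‖ζ-x‖²)^n dμ(ζ)`, the partial derivative of
`F` in `x` at `(0,0)` applied to `v` is `2n ∫ ⟪v, ζ⟫ f(ζ) dμ(ζ)`; in particular
its operator norm is at most `2n`. -/
theorem barycentric_partial_deriv_x (n : ℕ)
    (E : Type*) [NormedAddCommGroup E] [InnerProductSpace ℝ E]
    [FiniteDimensional ℝ E] [MeasurableSpace E] [BorelSpace E]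
    (hdim : Module.finrank ℝ E = n + 1)
    (μ : Measure E) [IsProbabilityMeasure μ]
    (hsupp : μ (Metric.sphere (0 : E) 1)ᶜ = 0)
    (hinv : ∀ R : E ≃ₗᵢ[ℝ] E, Measure.map R μ = μ)
    (f : E → E) (hf : ContinuousOn f (Metric.sphere (0 : E) 1))
    (hfs : Set.MapsTo f (Metric.sphere (0 : E) 1) (Metric.sphere (0 : E) 1))
    (hbal : ∫ ζ, f ζ ∂μ = 0)
    (F : E → E → E)
    (hF : ∀ x y, F x y =
      ∫ ζ, (((1 - ‖x‖ ^ 2) / ‖ζ - x‖ ^ 2) ^ n) • Mob (-y) (f ζ) ∂μ) :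
    ∃ D : E →L[ℝ] E, HasFDerivAt (fun x => F x 0) D (0 : E) ∧
      (∀ v : E, D v = ((2 * n : ℝ)) • ∫ ζ, ⟪v, ζ⟫ • f ζ ∂μ) ∧
      ‖D‖ ≤ 2 * n := by
  -- basic a.e. facts
  have hmem : ∀ᵐ ζ ∂μ, ζ ∈ Metric.sphere (0 : E) 1 := by
    rw [MeasureTheory.ae_iff]
    simpa [Set.compl_def] using hsupp
  have hfm : AEStronglyMeasurable f μ := by
    have h := hf.aestronglyMeasurable (μ := μ) (isClosed_sphere.measurableSet)
    rwa [Measure.restrict_eq_self_of_ae_mem hmem] at h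
  have hnorm_f : ∀ᵐ ζ ∂μ, ‖f ζ‖ = 1 := by
    filter_upwards [hmem] with ζ hζ
    simpa [mem_sphere_iff_norm] using hfs hζ
  -- kernel and its derivative
  set g : E → E → E := fun x ζ => (((1 - ‖x‖ ^ 2) / ‖ζ - x‖ ^ 2) ^ n) • f ζ with hg
  set g' : E → E → (E →L[ℝ] E) := fun x ζ =>
    (((2 * n : ℝ) * ((1 - ‖x‖ ^ 2) / ‖ζ - x‖ ^ 2) ^ (n - 1) / (‖ζ - x‖ ^ 2) ^ 2) •
      ((1 - ‖x‖ ^ 2) • innerSL ℝ (ζ - x) - (‖ζ - x‖ ^ 2) • innerSL ℝ x)).smulRight (f ζ)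
    with hg'
  set B : ℝ := 96 * n * 4 ^ (n - 1) with hB
  have hFeq : (fun x => F x 0) = fun x => ∫ ζ, g x ζ ∂μ := by
    funext x
    rw [hF]
    congr 1
    funext ζ
    simp [Mob, hg]
  -- measurability of g x
  have hmeas : ∀ x : E, AEStronglyMeasurable (g x) μ := by
    intro x
    exact (((measurable_const.div
      (((continuous_id.sub continuous_const).norm.pow 2).measurable)).pow_const
        n).aestronglyMeasurable).smul hfm
  -- measurability of g' 0
  have hg'meas : AEStronglyMeasurable (g' 0) μ := by
    have hden : Continuous fun ζ : E => ‖ζ - (0:E)‖ ^ 2 :=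
      ((continuous_id.sub continuous_const).norm.pow 2)
    have m2 : Measurable fun ζ : E =>
        (2 * n : ℝ) * ((1 - ‖(0:E)‖ ^ 2) / ‖ζ - 0‖ ^ 2) ^ (n - 1) / (‖ζ - 0‖ ^ 2) ^ 2 :=
      (measurable_const.mul ((measurable_const.div hden.measurable).pow_const (n-1))).div
        ((hden.pow 2).measurable)
    have hA2 : Continuous fun ζ : E =>
        (1 - ‖(0:E)‖ ^ 2) • innerSL ℝ (ζ - 0) - (‖ζ - 0‖ ^ 2) • innerSL ℝ (0:E) :=
      by fun_prop
    have hAsm : AEStronglyMeasurable (fun ζ : E =>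
        ((2 * n : ℝ) * ((1 - ‖(0:E)‖ ^ 2) / ‖ζ - 0‖ ^ 2) ^ (n - 1) / (‖ζ - 0‖ ^ 2) ^ 2) •
          ((1 - ‖(0:E)‖ ^ 2) • innerSL ℝ (ζ - 0) - (‖ζ - 0‖ ^ 2) • innerSL ℝ (0:E))) μ :=
      (m2.aestronglyMeasurable).smul hA2.aestronglyMeasurable
    exact Continuous.comp_aestronglyMeasurable₂
      (g := fun (L : E →L[ℝ] ℝ) (w : E) => L.smulRight w)
      (isBoundedBilinearMap_smulRight (𝕜 := ℝ)).continuous hAsm hfm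
  -- integrability of g 0
  have hint0 : Integrable (g 0) μ := by
    refine Integrable.mono' (integrable_const 1) (hmeas 0) ?_
    filter_upwards [hmem, hnorm_f] with ζ hζ h1
    have hζn : ‖ζ‖ = 1 := by simpa using hζ
    simp [hg, norm_smul, hζn, h1]
  -- derivative bound
  have hbound : ∀ᵐ ζ ∂μ, ∀ x ∈ ball (0:E) 2⁻¹, ‖g' x ζ‖ ≤ B := by
    filter_upwards [hmem, hnorm_f] with ζ hζ hfζ
    intro x hx
    have hζn : ‖ζ‖ = 1 := by simpa using hζ
    have hxn : ‖x‖ < 1/2 := by rw [mem_ball_zero_iff] at hx; linarith [hx]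
    have hzx : (1/2 : ℝ) ≤ ‖ζ - x‖ := by
      have h := norm_sub_norm_le ζ x; linarith
    have hzx2 : ‖ζ - x‖ ≤ 3/2 := by
      have h := norm_sub_le ζ x; linarith
    have hd1 : (1/4 : ℝ) ≤ ‖ζ - x‖^2 := by nlinarith
    have hd2 : ‖ζ - x‖^2 ≤ 9/4 := by nlinarith
    have hc1 : (0:ℝ) ≤ 1 - ‖x‖^2 := by nlinarith [norm_nonneg x]
    have hc2 : 1 - ‖x‖^2 ≤ 1 := by nlinarith [norm_nonneg x]
    have hq0 : (0:ℝ) ≤ (1 - ‖x‖^2)/‖ζ - x‖^2 := by positivity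
    have hq4 : (1 - ‖x‖^2)/‖ζ - x‖^2 ≤ 4 := by
      rw [div_le_iff₀ (by linarith)]; nlinarith
    have hqp : ((1 - ‖x‖^2)/‖ζ - x‖^2)^(n-1) ≤ 4^(n-1) := pow_le_pow_left₀ hq0 hq4 _
    have hqp0 : (0:ℝ) ≤ ((1 - ‖x‖^2)/‖ζ - x‖^2)^(n-1) := pow_nonneg hq0 _
    have h4 : (0:ℝ) ≤ (4:ℝ)^(n-1) := by positivity
    have h2n : (0:ℝ) ≤ 2*(n:ℝ) := by positivity
    have hd16 : (1/16 : ℝ) ≤ (‖ζ - x‖^2)^2 := by nlinarith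
    have hs : |(2 * (n:ℝ)) * ((1 - ‖x‖^2)/‖ζ - x‖^2)^(n-1) / (‖ζ - x‖^2)^2|
        ≤ 2 * (n:ℝ) * 4^(n-1) * 16 := by
      rw [abs_of_nonneg (by positivity), div_le_iff₀ (by nlinarith)]
      nlinarith [mul_le_mul_of_nonneg_left hqp h2n,
        mul_nonneg (mul_nonneg h2n h4) (by linarith : (0:ℝ) ≤ 16*(‖ζ - x‖^2)^2 - 1)]
    have hAn : ‖(1 - ‖x‖^2) • innerSL ℝ (ζ - x) - (‖ζ - x‖^2) • innerSL ℝ x‖ ≤ 3 := by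
      refine le_trans (norm_sub_le _ _) ?_
      have h1 := norm_smul (1 - ‖x‖ ^ 2) (innerSL ℝ (ζ - x))
      have h2 := norm_smul (‖ζ - x‖ ^ 2) (innerSL ℝ x)
      rw [h1, h2, innerSL_apply_norm, innerSL_apply_norm, Real.norm_eq_abs, Real.norm_eq_abs,
        abs_of_nonneg hc1, abs_of_nonneg (by positivity : (0:ℝ) ≤ ‖ζ - x‖ ^ 2)]
      nlinarith [norm_nonneg x]
    simp only [hg']
    rw [ContinuousLinearMap.norm_smulRight_apply, norm_smul, Real.norm_eq_abs, hfζ, mul_one]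
    calc |(2 * (n:ℝ)) * ((1 - ‖x‖^2)/‖ζ - x‖^2)^(n-1) / (‖ζ - x‖^2)^2| *
          ‖(1 - ‖x‖^2) • innerSL ℝ (ζ - x) - (‖ζ - x‖^2) • innerSL ℝ x‖
        ≤ (2 * (n:ℝ) * 4^(n-1) * 16) * 3 :=
          mul_le_mul hs hAn (norm_nonneg _) (by positivity)
      _ = B := by rw [hB]; ring
  -- differentiability
  have hdiff : ∀ᵐ ζ ∂μ, ∀ x ∈ ball (0:E) 2⁻¹, HasFDerivAt (fun x => g x ζ) (g' x ζ) x := by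
    filter_upwards [hmem] with ζ hζ
    intro x hx
    have hζn : ‖ζ‖ = 1 := by simpa using hζ
    have hxn : ‖x‖ < 1/2 := by rw [mem_ball_zero_iff] at hx; linarith [hx]
    have hzx : (1/2 : ℝ) ≤ ‖ζ - x‖ := by
      have h := norm_sub_norm_le ζ x; linarith
    have hd : (‖ζ - x‖:ℝ)^2 ≠ 0 := by nlinarith
    simpa only [hg, hg'] using aux_deriv n (f ζ) ζ x hd
  -- differentiation under the integral sign
  have key := hasFDerivAt_integral_of_dominated_of_fderiv_le (𝕜 := ℝ) (F := g) (F' := g')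
      (bound := fun _ => B) (x₀ := (0:E)) (s := ball (0:E) 2⁻¹) (ball_mem_nhds _ (by norm_num))
      (Filter.Eventually.of_forall hmeas) hint0 hg'meas hbound (integrable_const B) hdiff
  have hint' : Integrable (g' 0) μ := by
    refine Integrable.mono' (integrable_const B) hg'meas ?_
    filter_upwards [hbound] with ζ h
    exact h 0 (mem_ball_self (by norm_num))
  have hDv : ∀ v : E, (∫ ζ, g' 0 ζ ∂μ) v = ((2 * n : ℝ)) • ∫ ζ, ⟪v, ζ⟫ • f ζ ∂μ := by
    intro v
    rw [ContinuousLinearMap.integral_apply hint' v]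
    have hcongr : ∀ᵐ ζ ∂μ, g' 0 ζ v = ((2*(n:ℝ)) * ⟪v, ζ⟫) • f ζ := by
      filter_upwards [hmem] with ζ hζ
      have hζn : ‖ζ‖ = 1 := by simpa using hζ
      simp [hg', hζn, real_inner_comm ζ v]
    rw [integral_congr_ae hcongr, ← integral_smul]
    simp_rw [smul_smul]
  refine ⟨∫ ζ, g' 0 ζ ∂μ, by rw [hFeq]; exact key, hDv, ?_⟩
  refine ContinuousLinearMap.opNorm_le_bound _ (by positivity) fun v => ?_
  rw [hDv v, norm_smul, Real.norm_eq_abs, abs_of_nonneg (by positivity)]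
  have h1 : ‖∫ ζ, ⟪v, ζ⟫ • f ζ ∂μ‖ ≤ ‖v‖ := by
    have hae : ∀ᵐ ζ ∂μ, ‖⟪v, ζ⟫ • f ζ‖ ≤ ‖v‖ := by
      filter_upwards [hmem, hnorm_f] with ζ hζ hfζ
      have hζn : ‖ζ‖ = 1 := by simpa using hζ
      rw [norm_smul, hfζ, mul_one, Real.norm_eq_abs]
      calc |⟪v, ζ⟫| ≤ ‖v‖ * ‖ζ‖ := abs_real_inner_le_norm v ζ
        _ = ‖v‖ := by rw [hζn, mul_one]
    have h := norm_integral_le_of_norm_le (integrable_const ‖v‖) hae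
    simpa using h
  calc (2*(n:ℝ)) * ‖∫ ζ, ⟪v, ζ⟫ • f ζ ∂μ‖ ≤ 2*(n:ℝ) * ‖v‖ :=
        mul_le_mul_of_nonneg_left h1 (by positivity)
    _ = 2 * (n:ℝ) * ‖v‖ := rfl
end
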